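/- Let g ∈ L^∞(ℝ^N) and h ∈ L^1(ℝ^N), and suppose for some α ≥ 0, b ≥ 0, γ ∈ ℝ that lim_{|x|→∞} g(x) e^{α|x|} |x|^b = γ and ∫ |h(x)| e^{α|x|} |x|^b dx < ∞. Then for every z ∈ ℝ^N \ {0}, lim_{ρ→+∞} ( ∫ g(x + ρz) h(x) dx ) · e^{α|ρz|} |ρz|^b = γ ∫ h(x) e^{-α (x·z)/|z|} dx. -/

import Mathlib

open Real MeasureTheory Filter Topology

private lemma factor_aux (α b A s t : ℝ) (ht : 0 < t) (hs : 0 ≤ s) :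
    A * Real.exp (α * s) * s ^ b
      = (A * Real.exp (α * t) * t ^ b) * (Real.exp (α * (s - t)) * (s / t) ^ b) := by
  have h1 : Real.exp (α * t) * Real.exp (α * (s - t)) = Real.exp (α * s) := by
    rw [← Real.exp_add]; congr 1; ring
  have h2 : t ^ b * (s / t) ^ b = s ^ b := by
    rw [← Real.mul_rpow ht.le (div_nonneg hs ht.le), mul_div_cancel₀ _ ht.ne']
  calc A * Real.exp (α * s) * s ^ b
      = A * (Real.exp (α * t) * Real.exp (α * (s - t))) * (t ^ b * (s / t) ^ b) := by
        rw [h1, h2]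
    _ = (A * Real.exp (α * t) * t ^ b) * (Real.exp (α * (s - t)) * (s / t) ^ b) := by ring

set_option maxHeartbeats 2000000 in
theorem translated_integral_asymptotics (N : ℕ) (α b γ : ℝ) (hα : 0 ≤ α) (hb : 0 ≤ b)
    (g h : EuclideanSpace ℝ (Fin N) → ℝ)
    (hg : MemLp g ⊤) (hh : Integrable h)
    (hglim : Tendsto (fun x => g x * Real.exp (α * ‖x‖) * ‖x‖ ^ b)
      (Filter.cocompact (EuclideanSpace ℝ (Fin N))) (𝓝 γ))
    (hhint : Integrable (fun x => |h x| * Real.exp (α * ‖x‖) * ‖x‖ ^ b)) :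
    ∀ z : EuclideanSpace ℝ (Fin N), z ≠ 0 →
      Tendsto (fun ρ : ℝ =>
          (∫ x, g (x + ρ • z) * h x) * Real.exp (α * ‖ρ • z‖) * ‖ρ • z‖ ^ b)
        atTop
        (𝓝 (γ * ∫ x, h x * Real.exp (-(α * (inner ℝ x z : ℝ) / ‖z‖)))) := by
  intro z hzne
  have hz : (0 : ℝ) < ‖z‖ := norm_pos_iff.mpr hzne
  -- essential sup bound for g
  have hgfin : eLpNormEssSup g volume < ⊤ := by
    have h2 := hg.2; rwa [eLpNorm_exponent_top] at h2
  set M : ℝ := (eLpNormEssSup g volume).toReal with hMdef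
  have hM : ∀ᵐ y, ‖g y‖ ≤ M := by
    filter_upwards [ae_le_eLpNormEssSup (f := g) (μ := volume)] with y hy
    have h2 := ENNReal.toReal_mono hgfin.ne hy
    simpa using h2
  have hM0 : (0 : ℝ) ≤ M := ENNReal.toReal_nonneg
  -- escape from a compact set
  obtain ⟨K, hK, hKg⟩ : ∃ K : Set (EuclideanSpace ℝ (Fin N)), IsCompact K ∧
      ∀ y ∈ Kᶜ, dist (g y * Real.exp (α * ‖y‖) * ‖y‖ ^ b) γ < 1 := by
    have h2 := (Metric.tendsto_nhds.1 hglim) 1 one_pos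
    rwa [(Filter.hasBasis_cocompact).eventually_iff] at h2
  obtain ⟨R₀, hR₀⟩ := hK.isBounded.subset_closedBall 0
  set R : ℝ := max R₀ 1 with hRdef
  have hR1 : (1 : ℝ) ≤ R := le_max_right _ _
  have hgout : ∀ y, R < ‖y‖ → |g y| * Real.exp (α * ‖y‖) * ‖y‖ ^ b ≤ |γ| + 1 := by
    intro y hy
    have hyK : y ∈ Kᶜ := by
      intro hyK
      have := hR₀ hyK
      rw [Metric.mem_closedBall, dist_zero_right] at this
      have : ‖y‖ ≤ R := le_trans this (le_max_left _ _)
      linarith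
    have hd := hKg y hyK
    rw [Real.dist_eq] at hd
    have habs : |g y * Real.exp (α * ‖y‖) * ‖y‖ ^ b| = |g y| * Real.exp (α * ‖y‖) * ‖y‖ ^ b := by
      rw [abs_mul, abs_mul, Real.abs_exp, abs_of_nonneg (Real.rpow_nonneg (norm_nonneg y) b)]
    calc |g y| * Real.exp (α * ‖y‖) * ‖y‖ ^ b
        = |g y * Real.exp (α * ‖y‖) * ‖y‖ ^ b| := habs.symm
      _ ≤ |g y * Real.exp (α * ‖y‖) * ‖y‖ ^ b - γ| + |γ| := by
          have := abs_sub_abs_le_abs_sub (g y * Real.exp (α * ‖y‖) * ‖y‖ ^ b) γ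
          linarith [abs_abs γ]
      _ ≤ |γ| + 1 := by linarith
  set C : ℝ := max (|γ| + 1) (M * Real.exp (α * R) * R ^ b) with hCdef
  have hC0 : (0 : ℝ) ≤ C := le_trans (by positivity) (le_max_left _ _)
  -- key pointwise estimate for g along translations
  have hkey : ∀ (u : EuclideanSpace ℝ (Fin N)) (x : EuclideanSpace ℝ (Fin N)),
      ‖g (x + u)‖ ≤ M →
      |g (x + u)| * Real.exp (α * ‖u‖) * ‖u‖ ^ b
        ≤ C * (Real.exp (α * ‖x‖) * (1 + ‖x‖) ^ b) := by
    intro u x hgx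
    set y := x + u with hy
    have hsyx : ‖u‖ ≤ ‖y‖ + ‖x‖ := by
      have h2 := norm_sub_le y x
      rwa [hy, add_sub_cancel_left] at h2
    have hs0 : (0 : ℝ) ≤ ‖u‖ := norm_nonneg u
    rcases lt_or_ge R ‖y‖ with hyR | hyR
    · -- far case
      have hy1 : (1 : ℝ) ≤ ‖y‖ := le_trans hR1 hyR.le
      have hy0 : (0 : ℝ) < ‖y‖ := by linarith
      rw [factor_aux α b |g y| ‖u‖ ‖y‖ hy0 hs0]
      have hdiv : ‖u‖ / ‖y‖ ≤ 1 + ‖x‖ := by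
        rw [div_le_iff₀ hy0]
        nlinarith [norm_nonneg x]
      have hinner : Real.exp (α * (‖u‖ - ‖y‖)) * (‖u‖ / ‖y‖) ^ b
          ≤ Real.exp (α * ‖x‖) * (1 + ‖x‖) ^ b := by
        apply mul_le_mul
        · apply Real.exp_le_exp.2
          apply mul_le_mul_of_nonneg_left _ hα
          linarith
        · exact Real.rpow_le_rpow (by positivity) hdiv hb
        · positivity
        · positivity
      calc |g y| * Real.exp (α * ‖y‖) * ‖y‖ ^ b *
            (Real.exp (α * (‖u‖ - ‖y‖)) * (‖u‖ / ‖y‖) ^ b)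
          ≤ (|γ| + 1) * (Real.exp (α * ‖x‖) * (1 + ‖x‖) ^ b) := by
            apply mul_le_mul (hgout y hyR) hinner (by positivity) (by positivity)
        _ ≤ C * (Real.exp (α * ‖x‖) * (1 + ‖x‖) ^ b) :=
            mul_le_mul_of_nonneg_right (le_max_left _ _) (by positivity)
    · -- near case
      have hgx' : |g y| ≤ M := by rwa [Real.norm_eq_abs] at hgx
      have hsxR : ‖u‖ ≤ ‖x‖ + R := by linarith
      have hexp : Real.exp (α * ‖u‖) ≤ Real.exp (α * R) * Real.exp (α * ‖x‖) := by
        rw [← Real.exp_add]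
        apply Real.exp_le_exp.2
        nlinarith [mul_le_mul_of_nonneg_left hsxR hα]
      have hpow : ‖u‖ ^ b ≤ R ^ b * (1 + ‖x‖) ^ b := by
        rw [← Real.mul_rpow (by positivity) (by positivity)]
        apply Real.rpow_le_rpow hs0 _ hb
        nlinarith [norm_nonneg x]
      calc |g y| * Real.exp (α * ‖u‖) * ‖u‖ ^ b
          ≤ M * (Real.exp (α * R) * Real.exp (α * ‖x‖)) * (R ^ b * (1 + ‖x‖) ^ b) := by
            apply mul_le_mul _ hpow (by positivity)
            · positivity
            · apply mul_le_mul hgx' hexp (by positivity) hM0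
        _ = (M * Real.exp (α * R) * R ^ b) * (Real.exp (α * ‖x‖) * (1 + ‖x‖) ^ b) := by ring
        _ ≤ C * (Real.exp (α * ‖x‖) * (1 + ‖x‖) ^ b) :=
            mul_le_mul_of_nonneg_right (le_max_right _ _) (by positivity)
  -- bound function and its integrability
  have hb2 : ∀ t : ℝ, 0 ≤ t → (1 + t) ^ b ≤ 2 ^ b + 2 ^ b * t ^ b := by
    intro t ht
    rcases le_total t 1 with h1 | h1
    · have h2 : (1 + t) ^ b ≤ (2 : ℝ) ^ b := Real.rpow_le_rpow (by linarith) (by linarith) hb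
      have h3 : (0 : ℝ) ≤ 2 ^ b * t ^ b := by positivity
      linarith
    · have h2 : (1 + t) ^ b ≤ (2 * t) ^ b := Real.rpow_le_rpow (by linarith) (by linarith) hb
      rw [Real.mul_rpow (by norm_num) ht] at h2
      have h3 : (0 : ℝ) ≤ (2 : ℝ) ^ b := by positivity
      linarith
  have hexp1 : ∀ x : EuclideanSpace ℝ (Fin N),
      |h x| * Real.exp (α * ‖x‖)
        ≤ Real.exp α * |h x| + |h x| * Real.exp (α * ‖x‖) * ‖x‖ ^ b := by
    intro x
    rcases le_total ‖x‖ 1 with h1 | h1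
    · have h2 : Real.exp (α * ‖x‖) ≤ Real.exp α := by
        apply Real.exp_le_exp.2; nlinarith
      have h3 : (0 : ℝ) ≤ |h x| * Real.exp (α * ‖x‖) * ‖x‖ ^ b := by positivity
      nlinarith [abs_nonneg (h x)]
    · have hx1 : (1 : ℝ) ≤ ‖x‖ ^ b := by
        calc (1 : ℝ) = 1 ^ b := (Real.one_rpow b).symm
          _ ≤ ‖x‖ ^ b := Real.rpow_le_rpow zero_le_one h1 hb
      have h2 : (0 : ℝ) ≤ Real.exp α * |h x| := by positivity
      nlinarith [mul_le_mul_of_nonneg_left hx1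
        (by positivity : (0 : ℝ) ≤ |h x| * Real.exp (α * ‖x‖))]
  have bound_int : Integrable
      (fun x : EuclideanSpace ℝ (Fin N) =>
        C * (|h x| * Real.exp (α * ‖x‖) * (1 + ‖x‖) ^ b)) := by
    have hcont1 : Continuous fun x : EuclideanSpace ℝ (Fin N) => Real.exp (α * ‖x‖) :=
      Real.continuous_exp.comp (continuous_const.mul continuous_norm)
    have hcont2 : Continuous fun x : EuclideanSpace ℝ (Fin N) => (1 + ‖x‖) ^ b := by
      apply Continuous.rpow_const (continuous_const.add continuous_norm)
      intro x
      left
      exact (by positivity : (0:ℝ) < 1 + ‖x‖).ne'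
    apply Integrable.mono'
      (g := fun x => (C * 2 ^ b * Real.exp α) * |h x|
        + (C * 2 ^ b * 2) * (|h x| * Real.exp (α * ‖x‖) * ‖x‖ ^ b))
    · exact (hh.abs.const_mul _).add (hhint.const_mul _)
    · exact (((hh.abs.1.mul hcont1.aestronglyMeasurable).mul
        hcont2.aestronglyMeasurable).const_mul C)
    · apply Filter.Eventually.of_forall
      intro x
      have hnn : (0 : ℝ) ≤ C * (|h x| * Real.exp (α * ‖x‖) * (1 + ‖x‖) ^ b) := by positivity
      rw [Real.norm_eq_abs, abs_of_nonneg hnn]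
      have e1 := hb2 ‖x‖ (norm_nonneg x)
      have e2 := hexp1 x
      have hA0 : (0 : ℝ) ≤ |h x| * Real.exp (α * ‖x‖) := by positivity
      calc C * (|h x| * Real.exp (α * ‖x‖) * (1 + ‖x‖) ^ b)
          ≤ C * (|h x| * Real.exp (α * ‖x‖) * (2 ^ b + 2 ^ b * ‖x‖ ^ b)) := by gcongr
        _ = C * 2 ^ b * (|h x| * Real.exp (α * ‖x‖))
            + C * 2 ^ b * (|h x| * Real.exp (α * ‖x‖) * ‖x‖ ^ b) := by ring
        _ ≤ C * 2 ^ b * (Real.exp α * |h x| + |h x| * Real.exp (α * ‖x‖) * ‖x‖ ^ b)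
            + C * 2 ^ b * (|h x| * Real.exp (α * ‖x‖) * ‖x‖ ^ b) := by gcongr
        _ = (C * 2 ^ b * Real.exp α) * |h x|
            + (C * 2 ^ b * 2) * (|h x| * Real.exp (α * ‖x‖) * ‖x‖ ^ b) := by ring
  -- measurability of the integrands
  have hF_meas : ∀ ρ : ℝ, AEStronglyMeasurable
      (fun x : EuclideanSpace ℝ (Fin N) =>
        (g (x + ρ • z) * h x) * Real.exp (α * ‖ρ • z‖) * ‖ρ • z‖ ^ b) volume := by
    intro ρ
    have hqmp : MeasureTheory.Measure.QuasiMeasurePreserving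
        (fun x : EuclideanSpace ℝ (Fin N) => x + ρ • z) volume volume :=
      (measurePreserving_add_right volume (ρ • z)).quasiMeasurePreserving
    exact (((hg.1.comp_quasiMeasurePreserving hqmp).mul hh.1).mul_const _).mul_const _
  -- domination
  have h_bound : ∀ᶠ ρ : ℝ in atTop, ∀ᵐ x,
      ‖(g (x + ρ • z) * h x) * Real.exp (α * ‖ρ • z‖) * ‖ρ • z‖ ^ b‖
        ≤ C * (|h x| * Real.exp (α * ‖x‖) * (1 + ‖x‖) ^ b) := by
    apply Filter.Eventually.of_forall
    intro ρ
    have hqmp : MeasureTheory.Measure.QuasiMeasurePreserving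
        (fun x : EuclideanSpace ℝ (Fin N) => x + ρ • z) volume volume :=
      (measurePreserving_add_right volume (ρ • z)).quasiMeasurePreserving
    filter_upwards [hqmp.tendsto_ae.eventually hM] with x hgx
    have hk := hkey (ρ • z) x hgx
    have habs : ‖(g (x + ρ • z) * h x) * Real.exp (α * ‖ρ • z‖) * ‖ρ • z‖ ^ b‖
        = (|g (x + ρ • z)| * Real.exp (α * ‖ρ • z‖) * ‖ρ • z‖ ^ b) * |h x| := by
      rw [Real.norm_eq_abs, abs_mul, abs_mul, abs_mul, Real.abs_exp,
        abs_of_nonneg (Real.rpow_nonneg (norm_nonneg _) b)]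
      ring
    rw [habs]
    calc (|g (x + ρ • z)| * Real.exp (α * ‖ρ • z‖) * ‖ρ • z‖ ^ b) * |h x|
        ≤ (C * (Real.exp (α * ‖x‖) * (1 + ‖x‖) ^ b)) * |h x| :=
          mul_le_mul_of_nonneg_right hk (abs_nonneg _)
      _ = C * (|h x| * Real.exp (α * ‖x‖) * (1 + ‖x‖) ^ b) := by ring
  -- pointwise limit
  have h_lim : ∀ᵐ x : EuclideanSpace ℝ (Fin N), Tendsto
      (fun ρ : ℝ => (g (x + ρ • z) * h x) * Real.exp (α * ‖ρ • z‖) * ‖ρ • z‖ ^ b) atTop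
      (𝓝 (γ * (h x * Real.exp (-(α * (inner ℝ x z : ℝ) / ‖z‖))))) := by
    apply Filter.Eventually.of_forall
    intro x
    have hv : Tendsto (fun ρ : ℝ => ‖ρ⁻¹ • x + z‖) atTop (𝓝 ‖z‖) := by
      have h1 : Tendsto (fun ρ : ℝ => ρ⁻¹ • x + z) atTop (𝓝 ((0 : ℝ) • x + z)) :=
        (tendsto_inv_atTop_zero.smul_const x).add tendsto_const_nhds
      have h2 := h1.norm
      simpa using h2
    have hu : ∀ ρ : ℝ, 0 < ρ → ‖x + ρ • z‖ = ρ * ‖ρ⁻¹ • x + z‖ := by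
      intro ρ hρ
      have h1 : ρ • (ρ⁻¹ • x + z) = x + ρ • z := by
        rw [smul_add, smul_smul, mul_inv_cancel₀ hρ.ne', one_smul]
      rw [← h1, norm_smul, Real.norm_eq_abs, abs_of_pos hρ]
    have hT1 : Tendsto (fun ρ : ℝ => ‖x + ρ • z‖ - ρ * ‖z‖) atTop
        (𝓝 ((inner ℝ x z : ℝ) / ‖z‖)) := by
      have hnum : Tendsto
          (fun ρ : ℝ => (‖x‖ ^ 2 * ρ⁻¹ + 2 * (inner ℝ x z : ℝ)) / (‖ρ⁻¹ • x + z‖ + ‖z‖))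
          atTop (𝓝 ((0 + 2 * (inner ℝ x z : ℝ)) / (‖z‖ + ‖z‖))) := by
        apply Tendsto.div
        · exact Tendsto.add (by simpa using tendsto_inv_atTop_zero.const_mul (‖x‖ ^ 2))
            tendsto_const_nhds
        · exact hv.add tendsto_const_nhds
        · exact (by linarith : (0:ℝ) < ‖z‖ + ‖z‖).ne'
      have hval : (0 + 2 * (inner ℝ x z : ℝ)) / (‖z‖ + ‖z‖) = (inner ℝ x z : ℝ) / ‖z‖ := by
        rw [zero_add, show ‖z‖ + ‖z‖ = 2 * ‖z‖ from by ring,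
          mul_div_mul_left _ _ (two_ne_zero)]
      rw [hval] at hnum
      apply hnum.congr'
      filter_upwards [eventually_gt_atTop 0] with ρ hρ
      have hd : (0 : ℝ) < ‖x + ρ • z‖ + ρ * ‖z‖ := by
        have h1 : (0 : ℝ) < ρ * ‖z‖ := mul_pos hρ hz
        have h2 := norm_nonneg (x + ρ • z)
        linarith
      have hsq : ‖x + ρ • z‖ ^ 2 = ‖x‖ ^ 2 + 2 * (ρ * (inner ℝ x z : ℝ)) + (ρ * ‖z‖) ^ 2 := by
        rw [norm_add_sq_real, real_inner_smul_right, norm_smul, Real.norm_eq_abs,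
          abs_of_pos hρ]
      have key : ‖x + ρ • z‖ - ρ * ‖z‖
          = (‖x‖ ^ 2 + 2 * ρ * (inner ℝ x z : ℝ)) / (‖x + ρ • z‖ + ρ * ‖z‖) := by
        rw [eq_div_iff hd.ne']
        nlinarith [hsq]
      rw [key, hu ρ hρ]
      have e1 : ‖x‖ ^ 2 + 2 * ρ * (inner ℝ x z : ℝ)
          = ρ * (‖x‖ ^ 2 * ρ⁻¹ + 2 * (inner ℝ x z : ℝ)) := by
        field_simp
      have e2 : ρ * ‖ρ⁻¹ • x + z‖ + ρ * ‖z‖ = ρ * (‖ρ⁻¹ • x + z‖ + ‖z‖) := by ring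
      rw [e1, e2, mul_div_mul_left _ _ hρ.ne']
    have hT1' : Tendsto (fun ρ : ℝ => ρ * ‖z‖ - ‖x + ρ • z‖) atTop
        (𝓝 (-((inner ℝ x z : ℝ) / ‖z‖))) := by
      have := hT1.neg
      simpa [neg_sub] using this
    have hT3 : Tendsto (fun ρ : ℝ => ρ * ‖z‖ / ‖x + ρ • z‖) atTop (𝓝 1) := by
      have hfrac : Tendsto (fun ρ : ℝ => ‖z‖ / ‖ρ⁻¹ • x + z‖) atTop (𝓝 (‖z‖ / ‖z‖)) :=
        tendsto_const_nhds.div hv hz.ne'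
      rw [div_self hz.ne'] at hfrac
      apply hfrac.congr'
      filter_upwards [eventually_gt_atTop 0] with ρ hρ
      rw [hu ρ hρ, mul_div_mul_left _ _ hρ.ne']
    have hcc : Tendsto (fun ρ : ℝ => x + ρ • z) atTop
        (cocompact (EuclideanSpace ℝ (Fin N))) := by
      apply tendsto_cocompact_of_tendsto_dist_comp_atTop (0 : EuclideanSpace ℝ (Fin N))
      simp only [dist_zero_right]
      apply tendsto_atTop_mono' _ _ (show Tendsto (fun ρ : ℝ => ρ * ‖z‖ - ‖x‖) atTop atTop by
        simpa [sub_eq_add_neg] using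
          tendsto_atTop_add_const_right atTop (-‖x‖) (tendsto_id.atTop_mul_const hz))
      filter_upwards [eventually_ge_atTop 0] with ρ hρ
      have h1 : ‖ρ • z‖ ≤ ‖x + ρ • z‖ + ‖x‖ := by
        have h2 := norm_sub_le (x + ρ • z) x
        rwa [add_sub_cancel_left] at h2
      rw [norm_smul, Real.norm_eq_abs, abs_of_nonneg hρ] at h1
      linarith
    have l1 : Tendsto
        (fun ρ : ℝ => g (x + ρ • z) * Real.exp (α * ‖x + ρ • z‖) * ‖x + ρ • z‖ ^ b)
        atTop (𝓝 γ) := hglim.comp hcc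
    have l2 : Tendsto (fun ρ : ℝ => Real.exp (α * (ρ * ‖z‖ - ‖x + ρ • z‖))) atTop
        (𝓝 (Real.exp (α * -((inner ℝ x z : ℝ) / ‖z‖)))) :=
      (Real.continuous_exp.tendsto _).comp (hT1'.const_mul α)
    have l3 : Tendsto (fun ρ : ℝ => (ρ * ‖z‖ / ‖x + ρ • z‖) ^ b) atTop (𝓝 1) := by
      have h2 := (Real.continuousAt_rpow_const 1 b (Or.inl one_ne_zero)).tendsto.comp hT3
      simpa [Real.one_rpow, Function.comp_def] using h2
    have lall := ((l1.mul (l2.mul l3)).mul_const (h x))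
    have hval : (γ * (Real.exp (α * -((inner ℝ x z : ℝ) / ‖z‖)) * 1)) * h x
        = γ * (h x * Real.exp (-(α * (inner ℝ x z : ℝ) / ‖z‖))) := by
      rw [show α * -((inner ℝ x z : ℝ) / ‖z‖) = -(α * (inner ℝ x z : ℝ) / ‖z‖) by ring]
      ring
    rw [hval] at lall
    apply lall.congr'
    filter_upwards [eventually_gt_atTop 0, eventually_ge_atTop ((‖x‖ + 1) / ‖z‖)]
      with ρ hρ hρ2
    have hs : ‖x‖ + 1 ≤ ρ * ‖z‖ := (div_le_iff₀ hz).1 hρ2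
    have h1 : ‖ρ • z‖ ≤ ‖x + ρ • z‖ + ‖x‖ := by
      have h2 := norm_sub_le (x + ρ • z) x
      rwa [add_sub_cancel_left] at h2
    have hsz : ‖ρ • z‖ = ρ * ‖z‖ := by
      rw [norm_smul, Real.norm_eq_abs, abs_of_pos hρ]
    have hy1 : (1 : ℝ) ≤ ‖x + ρ • z‖ := by
      rw [hsz] at h1
      linarith
    have hy0 : (0 : ℝ) < ‖x + ρ • z‖ := by linarith
    have hfac := factor_aux α b (g (x + ρ • z)) (ρ * ‖z‖) ‖x + ρ • z‖ hy0
      (mul_nonneg hρ.le (norm_nonneg z))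
    rw [hsz]
    linear_combination (h x) * hfac.symm
  -- apply dominated convergence
  have hDCT := tendsto_integral_filter_of_dominated_convergence
    (μ := volume)
    (F := fun (ρ : ℝ) (x : EuclideanSpace ℝ (Fin N)) =>
      (g (x + ρ • z) * h x) * Real.exp (α * ‖ρ • z‖) * ‖ρ • z‖ ^ b)
    (f := fun x => γ * (h x * Real.exp (-(α * (inner ℝ x z : ℝ) / ‖z‖))))
    (fun x => C * (|h x| * Real.exp (α * ‖x‖) * (1 + ‖x‖) ^ b))
    (Filter.Eventually.of_forall hF_meas) h_bound bound_int h_lim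
  have h1 : (fun ρ : ℝ =>
      (∫ x, g (x + ρ • z) * h x) * Real.exp (α * ‖ρ • z‖) * ‖ρ • z‖ ^ b)
      = fun ρ : ℝ =>
        ∫ x, (g (x + ρ • z) * h x) * Real.exp (α * ‖ρ • z‖) * ‖ρ • z‖ ^ b := by
    funext ρ
    rw [integral_mul_const, integral_mul_const]
  have h2 : γ * ∫ x, h x * Real.exp (-(α * (inner ℝ x z : ℝ) / ‖z‖))
      = ∫ x, γ * (h x * Real.exp (-(α * (inner ℝ x z : ℝ) / ‖z‖))) :=
    (integral_const_mul γ _).symm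
  rw [h1, h2]
  exact hDCT
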